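/- arXiv:1306.6378 — 4 statements merged into one kernel-verified Lean document; each statement's English description precedes it below -/
import Mathlib

section
/- Let N, D be positive natural numbers, let S, S' ∈ ℝ^{N×D} have orthonormal columns, and set Φ := S'Sᵀ. Let Θ : ℝ^N → ℝ be convex with Θ(x) ≥ 0 for all x, let h ∈ ℝ^N, let g be a subgradient of Θ at h, and define h⁺ := Φ( h − λ·(Θ(h)/‖g‖²)·g ) if g ≠ 0 and h⁺ := Φh if g = 0. Set Θ* := inf { Θ(x) : x ∈ Fix(Φ) } and suppose the infimum is attained at some h* ∈ Fix(Φ) (i.e. Θ(h*) = Θ*). If Θ(h) > 0 and 0 ≤ λ ≤ 2(1 − Θ*/Θ(h)), or if g = 0, then ‖h⁺ − h*‖ ≤ ‖h − h*‖ for every h* ∈ Fix(Φ) with Θ(h*) = Θ*. -/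
open Matrix
open scoped RealInnerProductSpace


lemma aux_adj {m n : ℕ} (A : Matrix (Fin m) (Fin n) ℝ) (x : EuclideanSpace ℝ (Fin n))
    (y : EuclideanSpace ℝ (Fin m)) :
    ⟪toEuclideanLin A x, y⟫ = ⟪x, toEuclideanLin Aᵀ y⟫ := by
  have : (Aᵀ : Matrix (Fin n) (Fin m) ℝ) = Aᴴ := by
    ext i j; simp [conjTranspose_apply]
  rw [this, Matrix.toEuclideanLin_conjTranspose_eq_adjoint,
    LinearMap.adjoint_inner_right]

lemma aux_mul {l m n : ℕ} (A : Matrix (Fin l) (Fin m) ℝ) (B : Matrix (Fin m) (Fin n) ℝ)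
    (x : EuclideanSpace ℝ (Fin n)) :
    toEuclideanLin (A * B) x = toEuclideanLin A (toEuclideanLin B x) := by
  simp [toEuclideanLin_apply, mulVec_mulVec]

lemma aux_nonexp {N D : ℕ} (S S' : Matrix (Fin N) (Fin D) ℝ)
    (hS : Sᵀ * S = 1) (hS' : S'ᵀ * S' = 1) (v : EuclideanSpace ℝ (Fin N)) :
    ‖toEuclideanLin (S' * Sᵀ) v‖ ≤ ‖v‖ := by
  have hiso : ∀ w : EuclideanSpace ℝ (Fin D), ‖toEuclideanLin S' w‖ = ‖w‖ := by
    intro w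
    have h1 : ⟪toEuclideanLin S' w, toEuclideanLin S' w⟫ = ⟪w, w⟫ := by
      rw [aux_adj, ← aux_mul, hS']
      simp [toEuclideanLin_apply]
    have := congrArg Real.sqrt h1
    rwa [← norm_eq_sqrt_real_inner, ← norm_eq_sqrt_real_inner] at this
  have hSt : ‖toEuclideanLin Sᵀ v‖ ≤ ‖v‖ := by
    by_cases hz : toEuclideanLin Sᵀ v = 0
    · simp [hz]
    · have h1 : ‖toEuclideanLin Sᵀ v‖ ^ 2 = ⟪v, toEuclideanLin S (toEuclideanLin Sᵀ v)⟫ := by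
        rw [← real_inner_self_eq_norm_sq]
        have := aux_adj Sᵀ v (toEuclideanLin Sᵀ v)
        rwa [transpose_transpose] at this
      have h2 : ⟪v, toEuclideanLin S (toEuclideanLin Sᵀ v)⟫ ≤
          ‖v‖ * ‖toEuclideanLin S (toEuclideanLin Sᵀ v)‖ := real_inner_le_norm _ _
      have h3 : ‖toEuclideanLin S (toEuclideanLin Sᵀ v)‖ = ‖toEuclideanLin Sᵀ v‖ := by
        have : ∀ w : EuclideanSpace ℝ (Fin D), ‖toEuclideanLin S w‖ = ‖w‖ := by
          intro w
          have h1 : ⟪toEuclideanLin S w, toEuclideanLin S w⟫ = ⟪w, w⟫ := by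
            rw [aux_adj, ← aux_mul, hS]
            simp [toEuclideanLin_apply]
          have := congrArg Real.sqrt h1
          rwa [← norm_eq_sqrt_real_inner, ← norm_eq_sqrt_real_inner] at this
        exact this _
      rw [h3] at h2
      have hpos : 0 < ‖toEuclideanLin Sᵀ v‖ := norm_pos_iff.mpr hz
      nlinarith [h1, h2]
  rw [aux_mul, hiso]
  exact hSt

/-- Monotone approximation: for `Φ := S'Sᵀ`, convex `Θ ≥ 0`,
a subgradient `g` of `Θ` at `h`, `h⁺ := Φ(h − λ(Θ(h)/‖g‖²)g)` if `g ≠ 0` and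
`h⁺ := Φh` otherwise, and `Θ* := inf_{Fix(Φ)} Θ` attained on `Fix(Φ)`:
if (`Θ(h) > 0` and `0 ≤ λ ≤ 2(1 − Θ*/Θ(h))`) or `g = 0`, then
`‖h⁺ − h*‖ ≤ ‖h − h*‖` for every minimizer `h* ∈ Fix(Φ)` of `Θ` over `Fix(Φ)`. -/
theorem stmt_9 (N D : ℕ) (hN : 0 < N) (hD : 0 < D)
    (S S' : Matrix (Fin N) (Fin D) ℝ)
    (hS : Sᵀ * S = 1) (hS' : S'ᵀ * S' = 1)
    (Θ : EuclideanSpace ℝ (Fin N) → ℝ)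
    (hconv : ConvexOn ℝ Set.univ Θ)
    (hnonneg : ∀ x, 0 ≤ Θ x)
    (h : EuclideanSpace ℝ (Fin N))
    (g : EuclideanSpace ℝ (Fin N))
    (hsub : ∀ x : EuclideanSpace ℝ (Fin N), ⟪x - h, g⟫ + Θ h ≤ Θ x)
    (lam : ℝ)
    (hplus : EuclideanSpace ℝ (Fin N))
    (hplus_def₁ : g ≠ 0 →
      hplus = toEuclideanLin (S' * Sᵀ) (h - lam • ((Θ h / ‖g‖ ^ 2) • g)))
    (hplus_def₂ : g = 0 → hplus = toEuclideanLin (S' * Sᵀ) h)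
    (Tstar : ℝ)
    (hattained : ∃ x : EuclideanSpace ℝ (Fin N),
      toEuclideanLin (S' * Sᵀ) x = x ∧ Θ x = Tstar)
    (hlb : ∀ x : EuclideanSpace ℝ (Fin N), toEuclideanLin (S' * Sᵀ) x = x → Tstar ≤ Θ x)
    (hcase : (0 < Θ h ∧ 0 ≤ lam ∧ lam ≤ 2 * (1 - Tstar / Θ h)) ∨ g = 0) :
    ∀ hstar : EuclideanSpace ℝ (Fin N),
      toEuclideanLin (S' * Sᵀ) hstar = hstar → Θ hstar = Tstar →
      ‖hplus - hstar‖ ≤ ‖h - hstar‖ := by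
  intro hstar hfix hmin
  by_cases hg : g = 0
  · have hne := aux_nonexp S S' hS hS' (h - hstar)
    rw [map_sub, hfix] at hne
    rwa [hplus_def₂ hg]
  · obtain ⟨hpos, hlam0, hlam2⟩ := hcase.resolve_right hg
    set t : ℝ := lam * (Θ h / ‖g‖ ^ 2) with ht
    set u := h - hstar with hu
    have hkey : hplus - hstar = toEuclideanLin (S' * Sᵀ) (u - t • g) := by
      rw [hplus_def₁ hg]
      conv_lhs => rw [← hfix]
      rw [← map_sub]
      congr 1
      rw [smul_smul, hu]
      abel
    rw [hkey]
    refine le_trans (aux_nonexp S S' hS hS' _) ?_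
    have hgpos : (0:ℝ) < ‖g‖ ^ 2 := pow_pos (norm_pos_iff.mpr hg) 2
    have ht0 : 0 ≤ t := mul_nonneg hlam0 (div_nonneg hpos.le (sq_nonneg _))
    have hsubg : Θ h - Tstar ≤ ⟪u, g⟫ := by
      have := hsub hstar
      rw [hmin] at this
      have heq : ⟪hstar - h, g⟫ = -⟪u, g⟫ := by
        rw [hu, ← inner_neg_left]; congr 1; abel
      rw [heq] at this
      linarith
    have hexp : ‖u - t • g‖ ^ 2 = ‖u‖ ^ 2 - 2 * t * ⟪u, g⟫ + t ^ 2 * ‖g‖ ^ 2 := by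
      rw [norm_sub_sq_real, real_inner_smul_right, norm_smul]
      simp [mul_pow]
      ring
    have hlt : lam * Θ h ≤ 2 * (Θ h - Tstar) := by
      have h1 := mul_le_mul_of_nonneg_right hlam2 hpos.le
      have h2 : Tstar / Θ h * Θ h = Tstar := div_mul_cancel₀ _ hpos.ne'
      nlinarith [h1, h2]
    have htg : t * ‖g‖ ^ 2 = lam * Θ h := by
      rw [ht, mul_assoc, div_mul_cancel₀ _ hgpos.ne']
    have hsq : ‖u - t • g‖ ^ 2 ≤ ‖u‖ ^ 2 := by
      nlinarith [mul_le_mul_of_nonneg_left hsubg ht0, mul_le_mul_of_nonneg_left hlt ht0]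
    nlinarith [norm_nonneg (u - t • g), norm_nonneg u]
end

section
/- Let N, D be positive natural numbers, let S, S' ∈ ℝ^{N×D} have orthonormal columns, and set Φ := S'Sᵀ. Let Θ : ℝ^N → ℝ be convex with Θ(x) ≥ 0 for all x, let h ∈ ℝ^N, and assume Θ(h) > inf { Θ(x) : x ∈ ℝ^N } ≥ 0. Let g be a subgradient of Θ at h (necessarily g ≠ 0), set Θ* := inf { Θ(x) : x ∈ Fix(Φ) } and assume it is attained at some point of Fix(Φ). For λ with 0 < λ < 2(1 − Θ*/Θ(h)), define h⁺ := Φ( h − λ·(Θ(h)/‖g‖²)·g ). Then ‖h⁺ − h*‖ < ‖h − h*‖ for every h* ∈ Fix(Φ) with Θ(h*) = Θ*. -/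
open Matrix
open scoped RealInnerProductSpace


lemma adj_inner {N M : ℕ} (A : Matrix (Fin N) (Fin M) ℝ) (x : EuclideanSpace ℝ (Fin M))
    (y : EuclideanSpace ℝ (Fin N)) :
    ⟪toEuclideanLin A x, y⟫ = ⟪x, toEuclideanLin Aᵀ y⟫ := by
  have h : (Aᵀ : Matrix (Fin M) (Fin N) ℝ) = Aᴴ := by
    ext i j; simp [conjTranspose]
  rw [h, Matrix.toEuclideanLin_conjTranspose_eq_adjoint, LinearMap.adjoint_inner_right]

lemma iso_norm {N D : ℕ} (S : Matrix (Fin N) (Fin D) ℝ) (hS : Sᵀ * S = 1)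
    (y : EuclideanSpace ℝ (Fin D)) : ‖toEuclideanLin S y‖ = ‖y‖ := by
  have : ⟪toEuclideanLin S y, toEuclideanLin S y⟫ = ⟪y, y⟫ := by
    rw [adj_inner]
    have : toEuclideanLin Sᵀ (toEuclideanLin S y) = toEuclideanLin (Sᵀ * S) y := by
      simp [Matrix.toEuclideanLin_apply, Matrix.mulVec_mulVec]
    rw [this, hS]
    simp [Matrix.toEuclideanLin_apply]
  rw [norm_eq_sqrt_real_inner (toEuclideanLin S y), norm_eq_sqrt_real_inner y, this]

lemma nonexp {N D : ℕ} (S S' : Matrix (Fin N) (Fin D) ℝ)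
    (hS : Sᵀ * S = 1) (hS' : S'ᵀ * S' = 1) (x : EuclideanSpace ℝ (Fin N)) :
    ‖toEuclideanLin (S' * Sᵀ) x‖ ≤ ‖x‖ := by
  have hcomp : toEuclideanLin (S' * Sᵀ) x = toEuclideanLin S' (toEuclideanLin Sᵀ x) := by
    simp [Matrix.toEuclideanLin_apply, Matrix.mulVec_mulVec]
  rw [hcomp, iso_norm S' hS']
  -- show ‖toEuclideanLin Sᵀ x‖ ≤ ‖x‖
  set y := toEuclideanLin Sᵀ x with hy
  have h1 : ⟪y, y⟫ = ⟪toEuclideanLin S y, x⟫ := by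
    rw [adj_inner, Matrix.transpose_transpose, real_inner_comm]
  have h2 : ‖y‖ ^ 2 ≤ ‖y‖ * ‖x‖ := by
    have := real_inner_le_norm (toEuclideanLin S y) x
    rw [← h1] at this
    rw [iso_norm S hS] at this
    calc ‖y‖ ^ 2 = ⟪y, y⟫ := (real_inner_self_eq_norm_sq y).symm
    _ ≤ ‖y‖ * ‖x‖ := this
  rcases eq_or_lt_of_le (norm_nonneg y) with h0 | h0
  · rw [← h0]; exact norm_nonneg x
  · nlinarith

/-- Strict monotone approximation: for `Φ := S'Sᵀ`, convex `Θ ≥ 0`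
with `Θ(h) > inf_{ℝ^N} Θ ≥ 0`, a subgradient `g` of `Θ` at `h` (necessarily nonzero),
`Θ* := inf_{Fix(Φ)} Θ` attained on `Fix(Φ)`, and `0 < λ < 2(1 − Θ*/Θ(h))`,
the point `h⁺ := Φ(h − λ(Θ(h)/‖g‖²)g)` satisfies `‖h⁺ − h*‖ < ‖h − h*‖`
for every minimizer `h* ∈ Fix(Φ)` of `Θ` over `Fix(Φ)`. -/
theorem stmt_10 (N D : ℕ) (hN : 0 < N) (hD : 0 < D)
    (S S' : Matrix (Fin N) (Fin D) ℝ)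
    (hS : Sᵀ * S = 1) (hS' : S'ᵀ * S' = 1)
    (Θ : EuclideanSpace ℝ (Fin N) → ℝ)
    (hconv : ConvexOn ℝ Set.univ Θ)
    (hnonneg : ∀ x, 0 ≤ Θ x)
    (h : EuclideanSpace ℝ (Fin N))
    (hgt : (⨅ x : EuclideanSpace ℝ (Fin N), Θ x) < Θ h)
    (hinf_nonneg : 0 ≤ ⨅ x : EuclideanSpace ℝ (Fin N), Θ x)
    (g : EuclideanSpace ℝ (Fin N))
    (hsub : ∀ x : EuclideanSpace ℝ (Fin N), ⟪x - h, g⟫ + Θ h ≤ Θ x)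
    (Tstar : ℝ)
    (hattained : ∃ x : EuclideanSpace ℝ (Fin N),
      toEuclideanLin (S' * Sᵀ) x = x ∧ Θ x = Tstar)
    (hlb : ∀ x : EuclideanSpace ℝ (Fin N), toEuclideanLin (S' * Sᵀ) x = x → Tstar ≤ Θ x)
    (lam : ℝ) (hlam₁ : 0 < lam) (hlam₂ : lam < 2 * (1 - Tstar / Θ h)) :
    ∀ hstar : EuclideanSpace ℝ (Fin N),
      toEuclideanLin (S' * Sᵀ) hstar = hstar → Θ hstar = Tstar →
      ‖toEuclideanLin (S' * Sᵀ) (h - lam • ((Θ h / ‖g‖ ^ 2) • g)) - hstar‖ <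
        ‖h - hstar‖ := by
  intro hstar hfix hval
  have hTh : 0 < Θ h := lt_of_le_of_lt hinf_nonneg hgt
  -- g ≠ 0
  have hg : g ≠ 0 := by
    intro hg0
    have : ∀ x, Θ h ≤ Θ x := by
      intro x
      have := hsub x
      rw [hg0] at this
      simpa using this
    have : Θ h ≤ ⨅ x : EuclideanSpace ℝ (Fin N), Θ x := le_ciInf this
    exact absurd hgt (not_lt.mpr this)
  have hgn : 0 < ‖g‖ := norm_pos_iff.mpr hg
  -- Tstar ≥ 0 and Tstar < Θ h
  have hTs_nonneg : 0 ≤ Tstar := by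
    obtain ⟨x, _, hx⟩ := hattained
    rw [← hx]; exact hnonneg x
  have hTs_lt : Tstar < Θ h := by
    have h2 : 0 < 2 * (1 - Tstar / Θ h) := hlam₁.trans hlam₂
    have : Tstar / Θ h < 1 := by linarith
    calc Tstar = (Tstar / Θ h) * Θ h := by field_simp
    _ < 1 * Θ h := by exact mul_lt_mul_of_pos_right this hTh
    _ = Θ h := one_mul _
  set c : ℝ := lam * (Θ h / ‖g‖ ^ 2) with hc
  have hcpos : 0 < c := mul_pos hlam₁ (div_pos hTh (by positivity))
  set z : EuclideanSpace ℝ (Fin N) := h - lam • ((Θ h / ‖g‖ ^ 2) • g) with hz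
  have hzc : z = h - c • g := by rw [hz, hc, smul_smul]
  -- subgradient bound
  have hip : Θ h - Tstar ≤ ⟪h - hstar, g⟫ := by
    have := hsub hstar
    rw [hval] at this
    have hsplit : ⟪hstar - h, g⟫ = -⟪h - hstar, g⟫ := by
      rw [inner_sub_left, inner_sub_left]; ring
    rw [hsplit] at this
    linarith
  -- step 2: ‖z - hstar‖ < ‖h - hstar‖
  have hsq : ‖z - hstar‖ ^ 2 < ‖h - hstar‖ ^ 2 := by
    have hexp : z - hstar = (h - hstar) - c • g := by rw [hzc]; abel
    rw [hexp, @norm_sub_sq_real]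
    rw [real_inner_smul_right, norm_smul, Real.norm_eq_abs]
    have hlamTh : lam * Θ h < 2 * (Θ h - Tstar) := by
      have := hlam₂
      have h1 : lam * Θ h < (2 * (1 - Tstar / Θ h)) * Θ h :=
        mul_lt_mul_of_pos_right hlam₂ hTh
      calc lam * Θ h < (2 * (1 - Tstar / Θ h)) * Θ h := h1
      _ = 2 * (Θ h - Tstar) := by field_simp
    have hterm : -(2 * (c * ⟪h - hstar, g⟫)) + (|c| * ‖g‖) ^ 2 < 0 := by
      rw [abs_of_pos hcpos]
      have h1 : 2 * (c * (Θ h - Tstar)) ≤ 2 * (c * ⟪h - hstar, g⟫) := by nlinarith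
      have h2 : (c * ‖g‖) ^ 2 = c * (lam * Θ h) := by
        rw [hc]; field_simp
      nlinarith
    linarith
  have step2 : ‖z - hstar‖ < ‖h - hstar‖ :=
    lt_of_pow_lt_pow_left₀ 2 (norm_nonneg _) hsq
  -- step 1: nonexpansiveness
  have step1 : ‖toEuclideanLin (S' * Sᵀ) z - hstar‖ ≤ ‖z - hstar‖ := by
    have : toEuclideanLin (S' * Sᵀ) z - hstar = toEuclideanLin (S' * Sᵀ) (z - hstar) := by
      rw [map_sub (toEuclideanLin (S' * Sᵀ)) z hstar, hfix]
    rw [this]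
    exact nonexp S S' hS hS' (z - hstar)
  exact lt_of_le_of_lt step1 step2
end

section
/- Let N, D be positive natural numbers. For each k ∈ ℕ let S_k ∈ ℝ^{N×D} have orthonormal columns, and set Φ_k := S_{k+1}S_kᵀ. For each k let Θ_k : ℝ^N → ℝ be convex with Θ_k ≥ 0, let λ_k ∈ [0, 2], let h_0 ∈ ℝ^N, let g_k be a subgradient of Θ_k at h_k, and define recursively h_{k+1} := Φ_k( h_k − λ_k·(Θ_k(h_k)/‖g_k‖²)·g_k ) if g_k ≠ 0 and h_{k+1} := Φ_k h_k otherwise. Suppose there exist K₀ ∈ ℕ and ω ∈ ℝ^N such that for all k ≥ K₀: Φ_k ω = ω and Θ_k(ω) = 0. Then the sequence (h_k)_{k∈ℕ} is bounded. -/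
open Matrix
open scoped RealInnerProductSpace

lemma euc_comp {l m n : Type*} [Fintype l] [Fintype m] [Fintype n]
    [DecidableEq l] [DecidableEq m] [DecidableEq n]
    (A : Matrix l m ℝ) (B : Matrix m n ℝ) (x : EuclideanSpace ℝ n) :
    toEuclideanLin (A * B) x = toEuclideanLin A (toEuclideanLin B x) := by
  simp [Matrix.toEuclideanLin_apply, Matrix.mulVec_mulVec]

lemma euc_transpose_adjoint {m n : Type*} [Fintype m] [Fintype n] [DecidableEq m] [DecidableEq n]
    (A : Matrix m n ℝ) :
    toEuclideanLin Aᵀ = LinearMap.adjoint (toEuclideanLin A) := by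
  rw [← Matrix.toEuclideanLin_conjTranspose_eq_adjoint]
  congr 1

lemma euc_isometry {N D : ℕ} (A : Matrix (Fin N) (Fin D) ℝ) (hA : Aᵀ * A = 1)
    (u : EuclideanSpace ℝ (Fin D)) : ‖toEuclideanLin A u‖ = ‖u‖ := by
  have key : toEuclideanLin Aᵀ (toEuclideanLin A u) = u := by
    rw [← euc_comp, hA]
    simp [Matrix.toEuclideanLin_apply]
  have h2 : ⟪toEuclideanLin A u, toEuclideanLin A u⟫ = ⟪u, u⟫ := by
    rw [← LinearMap.adjoint_inner_right, ← euc_transpose_adjoint, key]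
  have hn : ‖toEuclideanLin A u‖ ^ 2 = ‖u‖ ^ 2 := by
    rw [← real_inner_self_eq_norm_sq, ← real_inner_self_eq_norm_sq, h2]
  have := congrArg Real.sqrt hn
  rwa [Real.sqrt_sq (norm_nonneg _), Real.sqrt_sq (norm_nonneg _)] at this

lemma euc_contr {N D : ℕ} (A : Matrix (Fin N) (Fin D) ℝ) (hA : Aᵀ * A = 1)
    (x : EuclideanSpace ℝ (Fin N)) : ‖toEuclideanLin Aᵀ x‖ ≤ ‖x‖ := by
  set u := toEuclideanLin Aᵀ x with hu
  have h1 : ⟪u, u⟫ = ⟪toEuclideanLin A u, x⟫ := by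
    rw [hu, euc_transpose_adjoint, LinearMap.adjoint_inner_left,
      ← euc_transpose_adjoint, real_inner_comm]
  have h2 : ⟪u, u⟫ ≤ ‖u‖ * ‖x‖ := by
    rw [h1]
    calc ⟪toEuclideanLin A u, x⟫ ≤ ‖toEuclideanLin A u‖ * ‖x‖ := real_inner_le_norm _ _
    _ = ‖u‖ * ‖x‖ := by rw [euc_isometry A hA]
  have h3 : ‖u‖ ^ 2 ≤ ‖u‖ * ‖x‖ := by rwa [← real_inner_self_eq_norm_sq]
  rcases eq_or_lt_of_le (norm_nonneg u) with h4 | h4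
  · rw [← h4]; exact norm_nonneg x
  · nlinarith

lemma euc_nonexp {N D : ℕ} (A : Matrix (Fin N) (Fin D) ℝ) (B : Matrix (Fin N) (Fin D) ℝ)
    (hA : Aᵀ * A = 1) (hB : Bᵀ * B = 1) (x : EuclideanSpace ℝ (Fin N)) :
    ‖toEuclideanLin (A * Bᵀ) x‖ ≤ ‖x‖ := by
  rw [euc_comp, euc_isometry A hA]
  exact euc_contr B hB x

/-- Boundedness of the R-APSM iterates: with `Φ_k := S_{k+1}S_kᵀ`,
convex `Θ_k ≥ 0`, `λ_k ∈ [0,2]`, subgradients `g_k` of `Θ_k` at `h_k`, and the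
recursion `h_{k+1} = Φ_k(h_k − λ_k(Θ_k(h_k)/‖g_k‖²)g_k)` (resp. `Φ_k h_k` when
`g_k = 0`), if there are `K₀` and `ω` with `Φ_k ω = ω` and `Θ_k(ω) = 0` for all
`k ≥ K₀`, then the sequence `(h_k)` is bounded. -/
theorem stmt_11 (N D : ℕ) (hN : 0 < N) (hD : 0 < D)
    (S : ℕ → Matrix (Fin N) (Fin D) ℝ)
    (hS : ∀ k, (S k)ᵀ * S k = 1)
    (Θ : ℕ → EuclideanSpace ℝ (Fin N) → ℝ)
    (hconv : ∀ k, ConvexOn ℝ Set.univ (Θ k))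
    (hnonneg : ∀ k x, 0 ≤ Θ k x)
    (lam : ℕ → ℝ) (hlam : ∀ k, lam k ∈ Set.Icc (0 : ℝ) 2)
    (h g : ℕ → EuclideanSpace ℝ (Fin N))
    (hsub : ∀ k, ∀ x : EuclideanSpace ℝ (Fin N), ⟪x - h k, g k⟫ + Θ k (h k) ≤ Θ k x)
    (hrec₁ : ∀ k, g k ≠ 0 → h (k + 1) =
      toEuclideanLin (S (k + 1) * (S k)ᵀ)
        (h k - lam k • ((Θ k (h k) / ‖g k‖ ^ 2) • g k)))
    (hrec₂ : ∀ k, g k = 0 → h (k + 1) = toEuclideanLin (S (k + 1) * (S k)ᵀ) (h k))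
    (K₀ : ℕ) (ω : EuclideanSpace ℝ (Fin N))
    (hω : ∀ k, K₀ ≤ k → toEuclideanLin (S (k + 1) * (S k)ᵀ) ω = ω ∧ Θ k ω = 0) :
    ∃ M : ℝ, ∀ k, ‖h k‖ ≤ M := by
  -- one-step Fejér monotonicity
  have step : ∀ k, K₀ ≤ k → ‖h (k + 1) - ω‖ ≤ ‖h k - ω‖ := by
    intro k hk
    obtain ⟨hfix, hzero⟩ := hω k hk
    have nonexp : ∀ v : EuclideanSpace ℝ (Fin N),
        ‖toEuclideanLin (S (k + 1) * (S k)ᵀ) v - ω‖ ≤ ‖v - ω‖ := by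
      intro v
      have : toEuclideanLin (S (k + 1) * (S k)ᵀ) v - ω
          = toEuclideanLin (S (k + 1) * (S k)ᵀ) (v - ω) := by
        rw [map_sub, hfix]
      rw [this]
      exact euc_nonexp _ _ (hS (k + 1)) (hS k) _
    by_cases hg : g k = 0
    · rw [hrec₂ k hg]; exact nonexp _
    · rw [hrec₁ k hg]
      refine le_trans (nonexp _) ?_
      -- key inequality
      set t : ℝ := lam k * (Θ k (h k) / ‖g k‖ ^ 2) with ht
      have hrw : h k - lam k • ((Θ k (h k) / ‖g k‖ ^ 2) • g k) - ω
          = (h k - ω) - t • g k := by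
        rw [smul_smul]; abel
      rw [hrw]
      have hgn : (0 : ℝ) < ‖g k‖ ^ 2 := pow_pos (norm_pos_iff.mpr hg) 2
      have hsub' := hsub k ω
      rw [hzero] at hsub'
      have hinner : Θ k (h k) ≤ ⟪h k - ω, g k⟫ := by
        have : ω - h k = -(h k - ω) := by abel
        rw [this, inner_neg_left] at hsub'
        linarith
    -- expand the square
      have hsq : ‖(h k - ω) - t • g k‖ ^ 2
          = ‖h k - ω‖ ^ 2 - 2 * (t * ⟪h k - ω, g k⟫) + t ^ 2 * ‖g k‖ ^ 2 := by
        rw [norm_sub_sq_real, real_inner_smul_right, norm_smul]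
        ring_nf
        rw [Real.norm_eq_abs, sq_abs]
      have hΘ := hnonneg k (h k)
      obtain ⟨hl0, hl2⟩ := hlam k
      have ht0 : 0 ≤ t := by positivity
      have htg : t * ‖g k‖ ^ 2 = lam k * Θ k (h k) := by
        rw [ht, mul_assoc, div_mul_cancel₀ _ hgn.ne']
      have hsqle : ‖(h k - ω) - t • g k‖ ^ 2 ≤ ‖h k - ω‖ ^ 2 := by
        rw [hsq]
        have h5 : t ^ 2 * ‖g k‖ ^ 2 = t * (lam k * Θ k (h k)) := by
          rw [← htg]; ring
        nlinarith [mul_le_mul_of_nonneg_left hinner ht0, mul_nonneg ht0 hΘ,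
          mul_le_mul_of_nonneg_left hl2 (mul_nonneg ht0 hΘ)]
      have := (pow_le_pow_iff_left₀ (norm_nonneg _) (norm_nonneg _) (two_ne_zero)).mp hsqle
      exact this
  -- iterate
  have iter : ∀ n, ‖h (K₀ + n) - ω‖ ≤ ‖h K₀ - ω‖ := by
    intro n
    induction n with
    | zero => simp
    | succ m ih =>
      have := step (K₀ + m) (Nat.le_add_right _ _)
      calc ‖h (K₀ + (m + 1)) - ω‖ = ‖h (K₀ + m + 1) - ω‖ := by ring_nf
      _ ≤ ‖h (K₀ + m) - ω‖ := this
      _ ≤ ‖h K₀ - ω‖ := ih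
  refine ⟨‖h K₀ - ω‖ + ‖ω‖ + ∑ i ∈ Finset.range K₀, ‖h i‖, fun k => ?_⟩
  have hsum : (0 : ℝ) ≤ ∑ i ∈ Finset.range K₀, ‖h i‖ :=
    Finset.sum_nonneg fun i _ => norm_nonneg _
  by_cases hk : K₀ ≤ k
  · obtain ⟨n, rfl⟩ := Nat.exists_eq_add_of_le hk
    have hx : ‖h (K₀ + n)‖ ≤ ‖h (K₀ + n) - ω‖ + ‖ω‖ := by
      calc ‖h (K₀ + n)‖ = ‖h (K₀ + n) - ω + ω‖ := by rw [sub_add_cancel]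
      _ ≤ ‖h (K₀ + n) - ω‖ + ‖ω‖ := norm_add_le _ _
    calc ‖h (K₀ + n)‖ ≤ ‖h (K₀ + n) - ω‖ + ‖ω‖ := hx
    _ ≤ ‖h K₀ - ω‖ + ‖ω‖ := by linarith [iter n]
    _ ≤ _ := by linarith
  · push_neg at hk
    have : ‖h k‖ ≤ ∑ i ∈ Finset.range K₀, ‖h i‖ :=
      Finset.single_le_sum (fun i _ => norm_nonneg (h i)) (Finset.mem_range.mpr hk)
    have h1 : (0:ℝ) ≤ ‖h K₀ - ω‖ := norm_nonneg _
    have h2 : (0:ℝ) ≤ ‖ω‖ := norm_nonneg _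
    linarith
end

section
/- Let N, D be positive natural numbers. For each k ∈ ℕ let S_k ∈ ℝ^{N×D} have orthonormal columns, and set Φ_k := S_{k+1}S_kᵀ. For each k let Θ_k : ℝ^N → ℝ be convex with Θ_k ≥ 0, let h_0 ∈ ℝ^N, let g_k be a subgradient of Θ_k at h_k, and define recursively h_{k+1} := Φ_k( h_k − λ_k·(Θ_k(h_k)/‖g_k‖²)·g_k ) if g_k ≠ 0 and h_{k+1} := Φ_k h_k otherwise. Suppose: (i) there exist K₀ ∈ ℕ and ω ∈ ℝ^N such that Φ_k ω = ω and Θ_k(ω) = 0 for all k ≥ K₀; (ii) there exist ε₁, ε₂ > 0 with λ_k ∈ [ε₁, 2 − ε₂] for all k; and (iii) the sequence (g_k)_{k∈ℕ} is bounded. Then lim_{k→∞} Θ_k(h_k) = 0. -/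
open Matrix
open scoped RealInnerProductSpace

lemma euc_mul_apply {l m n : ℕ} (A : Matrix (Fin l) (Fin m) ℝ) (B : Matrix (Fin m) (Fin n) ℝ)
    (x : EuclideanSpace ℝ (Fin n)) :
    Matrix.toEuclideanLin (A * B) x = Matrix.toEuclideanLin A (Matrix.toEuclideanLin B x) := by
  simp [Matrix.toEuclideanLin_apply, Matrix.mulVec_mulVec]

lemma euc_adj {m n : ℕ} (A : Matrix (Fin m) (Fin n) ℝ) (x : EuclideanSpace ℝ (Fin n))
    (y : EuclideanSpace ℝ (Fin m)) :
    ⟪Matrix.toEuclideanLin A x, y⟫ = ⟪x, Matrix.toEuclideanLin Aᵀ y⟫ := by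
  rw [← Matrix.conjTranspose_eq_transpose_of_trivial,
    Matrix.toEuclideanLin_conjTranspose_eq_adjoint]
  exact (LinearMap.adjoint_inner_right _ _ _).symm

lemma euc_iso {n d : ℕ} (A : Matrix (Fin n) (Fin d) ℝ) (hA : Aᵀ * A = 1)
    (z : EuclideanSpace ℝ (Fin d)) : ‖Matrix.toEuclideanLin A z‖ = ‖z‖ := by
  have h1 : ⟪Matrix.toEuclideanLin A z, Matrix.toEuclideanLin A z⟫ = ⟪z, z⟫ := by
    rw [euc_adj, ← euc_mul_apply, hA]
    simp [Matrix.toEuclideanLin_apply]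
  have := congrArg Real.sqrt h1
  rwa [real_inner_self_eq_norm_mul_norm, real_inner_self_eq_norm_mul_norm,
    Real.sqrt_mul_self (norm_nonneg _), Real.sqrt_mul_self (norm_nonneg _)] at this

lemma euc_contract {n d : ℕ} (A B : Matrix (Fin n) (Fin d) ℝ)
    (hA : Aᵀ * A = 1) (hB : Bᵀ * B = 1) (x : EuclideanSpace ℝ (Fin n)) :
    ‖Matrix.toEuclideanLin (A * Bᵀ) x‖ ≤ ‖x‖ := by
  set y := Matrix.toEuclideanLin Bᵀ x with hy
  have h1 : ‖Matrix.toEuclideanLin (A * Bᵀ) x‖ = ‖y‖ := by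
    rw [euc_mul_apply, euc_iso A hA]
  rw [h1]
  have h2 : ‖y‖ * ‖y‖ ≤ ‖x‖ * ‖y‖ := by
    have : ⟪y, y⟫ = ⟪x, Matrix.toEuclideanLin B y⟫ := by
      rw [hy, euc_adj, Matrix.transpose_transpose]
    calc ‖y‖ * ‖y‖ = ⟪y, y⟫ := (real_inner_self_eq_norm_mul_norm y).symm
      _ = ⟪x, Matrix.toEuclideanLin B y⟫ := this
      _ ≤ ‖x‖ * ‖Matrix.toEuclideanLin B y‖ := real_inner_le_norm _ _
      _ = ‖x‖ * ‖y‖ := by rw [euc_iso B hB]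
  rcases eq_or_lt_of_le (norm_nonneg y) with h0 | h0
  · rw [← h0]; exact norm_nonneg x
  · exact le_of_mul_le_mul_right h2 h0

/-- Asymptotic optimality of R-APSM: under the assumptions of
boundedness above, if moreover `λ_k ∈ [ε₁, 2 − ε₂]` for some `ε₁, ε₂ > 0` and the
subgradients `(g_k)` are bounded, then `Θ_k(h_k) → 0`. -/
theorem stmt_12 (N D : ℕ) (hN : 0 < N) (hD : 0 < D)
    (S : ℕ → Matrix (Fin N) (Fin D) ℝ)
    (hS : ∀ k, (S k)ᵀ * S k = 1)
    (Θ : ℕ → EuclideanSpace ℝ (Fin N) → ℝ)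
    (hconv : ∀ k, ConvexOn ℝ Set.univ (Θ k))
    (hnonneg : ∀ k x, 0 ≤ Θ k x)
    (lam : ℕ → ℝ)
    (h g : ℕ → EuclideanSpace ℝ (Fin N))
    (hsub : ∀ k, ∀ x : EuclideanSpace ℝ (Fin N), ⟪x - h k, g k⟫ + Θ k (h k) ≤ Θ k x)
    (hrec₁ : ∀ k, g k ≠ 0 → h (k + 1) =
      toEuclideanLin (S (k + 1) * (S k)ᵀ)
        (h k - lam k • ((Θ k (h k) / ‖g k‖ ^ 2) • g k)))
    (hrec₂ : ∀ k, g k = 0 → h (k + 1) = toEuclideanLin (S (k + 1) * (S k)ᵀ) (h k))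
    (K₀ : ℕ) (ω : EuclideanSpace ℝ (Fin N))
    (hω : ∀ k, K₀ ≤ k → toEuclideanLin (S (k + 1) * (S k)ᵀ) ω = ω ∧ Θ k ω = 0)
    (ε₁ ε₂ : ℝ) (hε₁ : 0 < ε₁) (hε₂ : 0 < ε₂)
    (hlam : ∀ k, lam k ∈ Set.Icc ε₁ (2 - ε₂))
    (hgbdd : ∃ G : ℝ, ∀ k, ‖g k‖ ≤ G) :
    Filter.Tendsto (fun k => Θ k (h k)) Filter.atTop (nhds 0) := by
  obtain ⟨G, hG⟩ := hgbdd
  set G' : ℝ := max G 1 with hG'def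
  have hG'pos : (0 : ℝ) < G' := lt_of_lt_of_le one_pos (le_max_right _ _)
  have hG' : ∀ k, ‖g k‖ ≤ G' := fun k => (hG k).trans (le_max_left _ _)
  set c : ℝ := ε₁ * ε₂ / G' ^ 2 with hcdef
  have hc : 0 < c := div_pos (mul_pos hε₁ hε₂) (by positivity)
  set a : ℕ → ℝ := fun k => ‖h k - ω‖ ^ 2 with hadef
  -- key decrease estimate
  have key : ∀ k, K₀ ≤ k → c * (Θ k (h k)) ^ 2 + a (k + 1) ≤ a k := by
    intro k hk
    obtain ⟨hfix, hzero⟩ := hω k hk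
    have hΘ0 : 0 ≤ Θ k (h k) := hnonneg k (h k)
    have hsubω := hsub k ω
    rw [hzero] at hsubω
    by_cases hg : g k = 0
    · have hz : (⟪ω - h k, g k⟫ : ℝ) = 0 := by rw [hg, inner_zero_right]
      have hΘz : Θ k (h k) = 0 := le_antisymm (by linarith) hΘ0
      have h1 : h (k + 1) - ω = toEuclideanLin (S (k + 1) * (S k)ᵀ) (h k - ω) := by
        rw [map_sub, hfix, hrec₂ k hg]
      have h2 : ‖h (k + 1) - ω‖ ≤ ‖h k - ω‖ := by
        rw [h1]; exact euc_contract _ _ (hS (k + 1)) (hS k) _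
      have hle : a (k + 1) ≤ a k := pow_le_pow_left₀ (norm_nonneg _) h2 2
      rw [hΘz]; simpa using hle
    · have hngpos : (0 : ℝ) < ‖g k‖ := norm_pos_iff.mpr hg
      obtain ⟨hl1, hl2⟩ := hlam k
      have hlkpos : 0 < lam k := lt_of_lt_of_le hε₁ hl1
      have ht0 : 0 ≤ Θ k (h k) / ‖g k‖ ^ 2 := div_nonneg hΘ0 (by positivity)
      have hz : (⟪ω - h k, g k⟫ : ℝ) = -⟪h k - ω, g k⟫ := by
        rw [← neg_sub (h k) ω, inner_neg_left]
      have hs : Θ k (h k) ≤ ⟪h k - ω, g k⟫ := by linarith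
      have h1 : h (k + 1) - ω =
          toEuclideanLin (S (k + 1) * (S k)ᵀ)
            (h k - lam k • ((Θ k (h k) / ‖g k‖ ^ 2) • g k) - ω) := by
        rw [map_sub, hfix, hrec₁ k hg]
      have h2 : a (k + 1) ≤ ‖h k - lam k • ((Θ k (h k) / ‖g k‖ ^ 2) • g k) - ω‖ ^ 2 := by
        have := euc_contract _ _ (hS (k + 1)) (hS k)
          (h k - lam k • ((Θ k (h k) / ‖g k‖ ^ 2) • g k) - ω)
        rw [← h1] at this
        exact pow_le_pow_left₀ (norm_nonneg _) this 2
      have hu : h k - lam k • ((Θ k (h k) / ‖g k‖ ^ 2) • g k) - ω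
          = (h k - ω) - (lam k * (Θ k (h k) / ‖g k‖ ^ 2)) • g k := by
        rw [smul_smul]; abel
      have h3 : ‖(h k - ω) - (lam k * (Θ k (h k) / ‖g k‖ ^ 2)) • g k‖ ^ 2
          = ‖h k - ω‖ ^ 2
            - 2 * (lam k * (Θ k (h k) / ‖g k‖ ^ 2)) * ⟪h k - ω, g k⟫
            + (lam k * (Θ k (h k) / ‖g k‖ ^ 2)) ^ 2 * ‖g k‖ ^ 2 := by
        rw [norm_sub_sq_real, real_inner_smul_right, norm_smul, Real.norm_eq_abs,
          abs_of_nonneg (mul_nonneg hlkpos.le ht0)]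
        ring
      have h4 : a (k + 1) ≤ ‖h k - ω‖ ^ 2
          - 2 * (lam k * (Θ k (h k) / ‖g k‖ ^ 2)) * Θ k (h k)
          + (lam k * (Θ k (h k) / ‖g k‖ ^ 2)) ^ 2 * ‖g k‖ ^ 2 := by
        have hmul : 2 * (lam k * (Θ k (h k) / ‖g k‖ ^ 2)) * Θ k (h k)
            ≤ 2 * (lam k * (Θ k (h k) / ‖g k‖ ^ 2)) * ⟪h k - ω, g k⟫ :=
          mul_le_mul_of_nonneg_left hs (by positivity)
        rw [hu, h3] at h2
        linarith
      have hval : ‖h k - ω‖ ^ 2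
          - 2 * (lam k * (Θ k (h k) / ‖g k‖ ^ 2)) * Θ k (h k)
          + (lam k * (Θ k (h k) / ‖g k‖ ^ 2)) ^ 2 * ‖g k‖ ^ 2
          = ‖h k - ω‖ ^ 2 - lam k * (2 - lam k) * (Θ k (h k) ^ 2 / ‖g k‖ ^ 2) := by
        field_simp
        ring
      have hlam2 : ε₁ * ε₂ ≤ lam k * (2 - lam k) :=
        mul_le_mul hl1 (by linarith) hε₂.le hlkpos.le
      have hdiv : Θ k (h k) ^ 2 / G' ^ 2 ≤ Θ k (h k) ^ 2 / ‖g k‖ ^ 2 := by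
        apply div_le_div_of_nonneg_left (by positivity) (by positivity)
        exact pow_le_pow_left₀ hngpos.le (hG' k) 2
      have hfin : c * Θ k (h k) ^ 2 ≤ lam k * (2 - lam k) * (Θ k (h k) ^ 2 / ‖g k‖ ^ 2) := by
        calc c * Θ k (h k) ^ 2 = ε₁ * ε₂ * (Θ k (h k) ^ 2 / G' ^ 2) := by
              rw [hcdef]; ring
          _ ≤ ε₁ * ε₂ * (Θ k (h k) ^ 2 / ‖g k‖ ^ 2) :=
              mul_le_mul_of_nonneg_left hdiv (by positivity)
          _ ≤ lam k * (2 - lam k) * (Θ k (h k) ^ 2 / ‖g k‖ ^ 2) :=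
              mul_le_mul_of_nonneg_right hlam2 (by positivity)
      rw [hval] at h4
      simp only [hadef] at h4 ⊢
      linarith
  -- the shifted sequence
  set b : ℕ → ℝ := fun k => a (k + K₀) with hbdef
  have hbanti : Antitone b := by
    apply antitone_nat_of_succ_le
    intro k
    have hkey := key (k + K₀) (Nat.le_add_left _ _)
    have hΘsq : 0 ≤ c * (Θ (k + K₀) (h (k + K₀))) ^ 2 := by positivity
    have hstep : a (k + K₀ + 1) ≤ a (k + K₀) := by linarith
    simpa [hbdef, Nat.add_right_comm] using hstep
  have hbbdd : BddBelow (Set.range b) := by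
    refine ⟨0, ?_⟩
    rintro x ⟨k, rfl⟩
    positivity
  have hbconv : Filter.Tendsto b Filter.atTop (nhds (⨅ k, b k)) :=
    tendsto_atTop_ciInf hbanti hbbdd
  have hdiff : Filter.Tendsto (fun k => b k - b (k + 1)) Filter.atTop (nhds 0) := by
    have h2 : Filter.Tendsto (fun k => b (k + 1)) Filter.atTop (nhds (⨅ k, b k)) :=
      hbconv.comp (Filter.tendsto_add_atTop_nat 1)
    simpa using hbconv.sub h2
  have hsq : Filter.Tendsto (fun k => (Θ (k + K₀) (h (k + K₀))) ^ 2) Filter.atTop (nhds 0) := by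
    apply squeeze_zero (fun k => by positivity)
      (g := fun k => (b k - b (k + 1)) / c)
    · intro k
      have hkey := key (k + K₀) (Nat.le_add_left _ _)
      rw [le_div_iff₀ hc, mul_comm]
      have hb1 : b (k + 1) = a (k + K₀ + 1) := by
        simp [hbdef, Nat.add_right_comm]
      rw [hb1]
      simp only [hbdef]
      linarith
    · simpa using hdiff.div_const c
  have hmain : Filter.Tendsto (fun k => Θ (k + K₀) (h (k + K₀))) Filter.atTop (nhds 0) := by
    have heq : (fun k => Θ (k + K₀) (h (k + K₀)))
        = fun k => Real.sqrt ((Θ (k + K₀) (h (k + K₀))) ^ 2) := by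
      funext k; rw [Real.sqrt_sq (hnonneg _ _)]
    rw [heq]
    have := (Real.continuous_sqrt.tendsto 0).comp hsq
    simpa [Function.comp_def] using this
  exact (Filter.tendsto_add_atTop_iff_nat K₀).mp hmain
end
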